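/- In the complete bipartite double-oral-auction mechanism, a buyer can make a no-change move (a move that overbids a matched seller while leaving the potential Φ_P unchanged) only if his bid equals the current lowest seller offer, and symmetrically a seller can make a no-change move only if his offer equals the current highest buyer bid. -/

import Mathlib

open Finset

/-- A market: buyers `B`, sellers `S`, trading edges `E`, valuations in `[0,1]`. -/
structure Market (B S : Type*) [Fintype B] [Fintype S] where
  E : Finset (B × S)
  valB : B → ℝ
  valS : S → ℝ
  valB_nonneg : ∀ b, 0 ≤ valB b
  valB_le_one : ∀ b, valB b ≤ 1
  valS_nonneg : ∀ s, 0 ≤ valS s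
  valS_le_one : ∀ s, valS s ≤ 1

/-- A state of the market: prices submitted by buyers and sellers, and a matching. -/
structure MState (B S : Type*) where
  PB : B → ℝ
  PS : S → ℝ
  M : Finset (B × S)

variable {B S : Type*} [Fintype B] [Fintype S]

/-- `Mat` is a matching contained in the edge set. -/
def IsMatching (Mk : Market B S) (Mat : Finset (B × S)) : Prop :=
  Mat ⊆ Mk.E ∧ (∀ p ∈ Mat, ∀ q ∈ Mat, p.1 = q.1 → p = q) ∧
    (∀ p ∈ Mat, ∀ q ∈ Mat, p.2 = q.2 → p = q)

def BMatched (st : MState B S) (b : B) : Prop := ∃ s, (b, s) ∈ st.M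
def SMatched (st : MState B S) (s : S) : Prop := ∃ b, (b, s) ∈ st.M

/-- A valid state: bids below valuations, offers above opportunity costs,
and within a matched pair the bid is at least the offer. -/
def ValidState (Mk : Market B S) (st : MState B S) : Prop :=
  IsMatching Mk st.M ∧ (∀ b, st.PB b ≤ Mk.valB b) ∧ (∀ s, Mk.valS s ≤ st.PS s) ∧
    ∀ p ∈ st.M, st.PS p.2 ≤ st.PB p.1

/-- Social welfare of a matching. -/
def SW (Mk : Market B S) (Mat : Finset (B × S)) : ℝ :=
  ∑ p ∈ Mat, (Mk.valB p.1 - Mk.valS p.2)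

/-- Stable state: no bid above an offer on any edge, unmatched agents submit their
valuations, matched pairs have equal prices. -/
def IsStable (Mk : Market B S) (st : MState B S) : Prop :=
  (∀ p ∈ Mk.E, st.PB p.1 ≤ st.PS p.2) ∧
  (∀ b, ¬ BMatched st b → st.PB b = Mk.valB b) ∧
  (∀ s, ¬ SMatched st s → st.PS s = Mk.valS s) ∧
  ∀ p ∈ st.M, st.PB p.1 = st.PS p.2

/-- ε-stable state. -/
def IsEpsStable (Mk : Market B S) (ε : ℝ) (st : MState B S) : Prop :=
  (∀ p ∈ Mk.E, st.PB p.1 - st.PS p.2 ≤ ε) ∧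
  (∀ b, ¬ BMatched st b → st.PB b = Mk.valB b) ∧
  (∀ s, ¬ SMatched st s → st.PS s = Mk.valS s) ∧
  ∀ p ∈ st.M, st.PB p.1 = st.PS p.2

/-- `x` is an integer multiple of `ε`. -/
def MulEps (ε x : ℝ) : Prop := ∃ k : ℤ, x = k * ε

variable [DecidableEq B] [DecidableEq S]

/-- Seller `s` is ε-interested in buyer `b` bidding `b'`. -/
def SellerInterested (Mk : Market B S) (ε : ℝ) (st : MState B S) (b' : ℝ) (b : B) (s : S) : Prop :=
  (b, s) ∈ Mk.E ∧ ((¬ SMatched st s ∧ st.PS s ≤ b') ∨ (SMatched st s ∧ st.PS s + ε ≤ b'))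

/-- Buyer `b` is ε-interested in seller `s` offering `s'`. -/
def BuyerInterested (Mk : Market B S) (ε : ℝ) (st : MState B S) (s' : ℝ) (s : S) (b : B) : Prop :=
  (b, s) ∈ Mk.E ∧ ((¬ BMatched st b ∧ s' ≤ st.PB b) ∨ (BMatched st b ∧ s' + ε ≤ st.PB b))

/-- Increment rule for a buyer: a new bid is at most (lowest neighbouring offer + ε) and
at most the lowest offer of an unmatched neighbouring seller. -/
def BuyIncrOK (Mk : Market B S) (ε : ℝ) (st : MState B S) (b : B) (b' : ℝ) : Prop :=
  (∀ s, (b, s) ∈ Mk.E → b' ≤ st.PS s + ε) ∧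
  (∀ s, (b, s) ∈ Mk.E → ¬ SMatched st s → b' ≤ st.PS s)

/-- Increment rule for a seller. -/
def SellIncrOK (Mk : Market B S) (ε : ℝ) (st : MState B S) (s : S) (s' : ℝ) : Prop :=
  (∀ b, (b, s) ∈ Mk.E → st.PB b - ε ≤ s') ∧
  (∀ b, (b, s) ∈ Mk.E → ¬ BMatched st b → st.PB b ≤ s')

/-- Match `b` with `s` at price `price`, displacing any previous partner of `s` (resp. `b`)
and equalizing the two submitted prices. -/
def matchPair (st : MState B S) (b : B) (s : S) (price : ℝ) : MState B S where
  PB := Function.update st.PB b price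
  PS := Function.update st.PS s price
  M := insert (b, s) (st.M.filter fun p => p.1 ≠ b ∧ p.2 ≠ s)

/-- One legal move of the DOA mechanism (Mechanism 1): an arbitrary recognized unmatched
agent either submits an improving price (respecting the minimum-increment and increment
rules, when no counterpart is interested) or matches with an ε-interested counterpart,
giving priority to unmatched counterparts. -/
inductive Step (Mk : Market B S) (ε : ℝ) : MState B S → MState B S → Prop
  | buyBid (st : MState B S) (b : B) (b' : ℝ) :
      ¬ BMatched st b → st.PB b < b' → b' ≤ Mk.valB b → MulEps ε b' →
      BuyIncrOK Mk ε st b b' →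
      (∀ s, ¬ SellerInterested Mk ε st b' b s) →
      Step Mk ε st ⟨Function.update st.PB b b', st.PS, st.M⟩
  | buyMatch (st : MState B S) (b : B) (b' : ℝ) (s : S) :
      ¬ BMatched st b → st.PB b ≤ b' → b' ≤ Mk.valB b → MulEps ε b' →
      BuyIncrOK Mk ε st b b' →
      SellerInterested Mk ε st b' b s →
      ((∃ s₀, SellerInterested Mk ε st b' b s₀ ∧ ¬ SMatched st s₀) → ¬ SMatched st s) →
      Step Mk ε st (matchPair st b s b')
  | sellOffer (st : MState B S) (s : S) (s' : ℝ) :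
      ¬ SMatched st s → s' < st.PS s → Mk.valS s ≤ s' → MulEps ε s' →
      SellIncrOK Mk ε st s s' →
      (∀ b, ¬ BuyerInterested Mk ε st s' s b) →
      Step Mk ε st ⟨st.PB, Function.update st.PS s s', st.M⟩
  | sellMatch (st : MState B S) (s : S) (s' : ℝ) (b : B) :
      ¬ SMatched st s → s' ≤ st.PS s → Mk.valS s ≤ s' → MulEps ε s' →
      SellIncrOK Mk ε st s s' →
      BuyerInterested Mk ε st s' s b →
      ((∃ b₀, BuyerInterested Mk ε st s' s b₀ ∧ ¬ BMatched st b₀) → ¬ BMatched st b) →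
      Step Mk ε st (matchPair st b s s')

/-- A valid starting state: valid, bids below offers on every edge, prices in `[0,1]`
and integer multiples of `ε`. -/
def ValidStart (Mk : Market B S) (ε : ℝ) (st : MState B S) : Prop :=
  ValidState Mk st ∧ (∀ p ∈ Mk.E, st.PB p.1 ≤ st.PS p.2) ∧
  (∀ b, 0 ≤ st.PB b) ∧ (∀ s, st.PS s ≤ 1) ∧
  (∀ b, MulEps ε (st.PB b)) ∧ (∀ s, MulEps ε (st.PS s))

/-- Reachability by a sequence of legal moves. -/
def Reachable (Mk : Market B S) (ε : ℝ) : MState B S → MState B S → Prop :=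
  Relation.ReflTransGen (Step Mk ε)

/-- The potential `Φ_P = Σ_S P(S) + Σ_B (1 − P(B))`. -/
def Phi (st : MState B S) : ℝ := ∑ s : S, st.PS s + ∑ b : B, (1 - st.PB b)

/-! ### Auxiliary lemmas -/

lemma mulEps_le_of_lt_add {ε x y : ℝ} (hε : 0 < ε) (hx : MulEps ε x) (hy : MulEps ε y)
    (h : x < y + ε) : x ≤ y := by
  obtain ⟨k, rfl⟩ := hx
  obtain ⟨m, rfl⟩ := hy
  have hk : (k : ℝ) * ε < (m + 1) * ε := by linarith
  have hk2 : (k : ℝ) < (m : ℝ) + 1 := by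
    have := (mul_lt_mul_iff_of_pos_right hε).mp hk
    push_cast at this ⊢; linarith
  have hk3 : k ≤ m := by exact_mod_cast Int.lt_add_one_iff.mp (by exact_mod_cast hk2)
  have : (k : ℝ) ≤ (m : ℝ) := by exact_mod_cast hk3
  nlinarith

/-- The invariant maintained along any run of the mechanism on a complete graph. -/
def DOAInv (ε : ℝ) (st : MState B S) : Prop :=
  (∀ b, ¬ BMatched st b → ∀ s, st.PB b ≤ st.PS s) ∧
  (∀ s, ¬ SMatched st s → ∀ b, st.PB b ≤ st.PS s) ∧
  (∀ p ∈ st.M, st.PB p.1 = st.PS p.2) ∧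
  (∀ b, MulEps ε (st.PB b)) ∧ (∀ s, MulEps ε (st.PS s))

lemma mem_matchPair {st : MState B S} {b : B} {s : S} {p : ℝ} {q : B × S} :
    q ∈ (matchPair st b s p).M ↔ q = (b, s) ∨ (q ∈ st.M ∧ q.1 ≠ b ∧ q.2 ≠ s) := by
  simp [matchPair, Finset.mem_insert, Finset.mem_filter]

lemma sum_update_univ {α : Type*} [Fintype α] [DecidableEq α] (f : α → ℝ) (a : α) (v : ℝ) :
    ∑ x, Function.update f a v x = ∑ x, f x + (v - f a) := by
  rw [Finset.sum_update_of_mem (Finset.mem_univ a), Finset.sdiff_singleton_eq_erase,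
    ← Finset.sum_erase_add Finset.univ f (Finset.mem_univ a)]
  ring

lemma phi_matchPair (st : MState B S) (b : B) (s : S) (p : ℝ) :
    Phi (matchPair st b s p) = Phi st + (st.PB b - st.PS s) := by
  unfold Phi matchPair
  simp only [Finset.sum_sub_distrib]
  rw [sum_update_univ, sum_update_univ]
  ring

lemma inv_step (Mk : Market B S) (hE : Mk.E = Finset.univ)
    {ε : ℝ} (hε : 0 < ε) {st st' : MState B S} (h : Step Mk ε st st')
    (hI : DOAInv ε st) : DOAInv ε st' := by
  obtain ⟨I1, I2, I3, I4, I5⟩ := hI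
  have edge : ∀ (b : B) (s : S), (b, s) ∈ Mk.E := fun b s => hE ▸ Finset.mem_univ _
  cases h with
  | buyBid b b' hb hlt hle hmul hinc hno =>
    have hno' : ∀ s₃ : S, ¬ ((¬ SMatched st s₃ ∧ st.PS s₃ ≤ b') ∨
        (SMatched st s₃ ∧ st.PS s₃ + ε ≤ b')) := fun s₃ h' => hno s₃ ⟨edge b s₃, h'⟩
    have key : ∀ s₃ : S, b' ≤ st.PS s₃ := by
      intro s₃
      have h' := hno' s₃
      push_neg at h'
      by_cases hsm : SMatched st s₃
      · exact mulEps_le_of_lt_add hε hmul (I5 s₃) (h'.2 hsm)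
      · exact le_of_lt (h'.1 hsm)
    refine ⟨?_, ?_, ?_, ?_, I5⟩
    · intro b₃ hb₃ s₃
      by_cases hbe : b₃ = b
      · subst hbe; simpa using key s₃
      · simpa [Function.update_of_ne hbe] using I1 b₃ hb₃ s₃
    · intro s₃ hs₃ b₃
      by_cases hbe : b₃ = b
      · subst hbe; simpa using key s₃
      · simpa [Function.update_of_ne hbe] using I2 s₃ hs₃ b₃
    · intro p hp
      have hne : p.1 ≠ b := fun h' => hb ⟨p.2, by simpa [← h'] using hp⟩
      simpa [Function.update_of_ne hne] using I3 p hp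
    · intro b₃
      by_cases hbe : b₃ = b
      · subst hbe; simpa using hmul
      · simpa [Function.update_of_ne hbe] using I4 b₃
  | sellOffer s s' hs hlt hle hmul hinc hno =>
    have hno' : ∀ b₃ : B, ¬ ((¬ BMatched st b₃ ∧ s' ≤ st.PB b₃) ∨
        (BMatched st b₃ ∧ s' + ε ≤ st.PB b₃)) := fun b₃ h' => hno b₃ ⟨edge b₃ s, h'⟩
    have key : ∀ b₃ : B, st.PB b₃ ≤ s' := by
      intro b₃
      have h' := hno' b₃
      push_neg at h'
      by_cases hbm : BMatched st b₃
      · exact mulEps_le_of_lt_add hε (I4 b₃) hmul (h'.2 hbm)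
      · exact le_of_lt (h'.1 hbm)
    refine ⟨?_, ?_, ?_, I4, ?_⟩
    · intro b₃ hb₃ s₃
      by_cases hse : s₃ = s
      · subst hse; simpa using key b₃
      · simpa [Function.update_of_ne hse] using I1 b₃ hb₃ s₃
    · intro s₃ hs₃ b₃
      by_cases hse : s₃ = s
      · subst hse; simpa using key b₃
      · simpa [Function.update_of_ne hse] using I2 s₃ hs₃ b₃
    · intro p hp
      have hne : p.2 ≠ s := fun h' => hs ⟨p.1, by simpa [← h'] using hp⟩
      simpa [Function.update_of_ne hne] using I3 p hp
    · intro s₃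
      by_cases hse : s₃ = s
      · subst hse; simpa using hmul
      · simpa [Function.update_of_ne hse] using I5 s₃
  | buyMatch b b' s hb hle1 hle2 hmul hinc hint hpri =>
    have hQs : st.PS s ≤ b' := by
      rcases hint.2 with ⟨_, h'⟩ | ⟨_, h'⟩ <;> linarith
    have hbne : ∀ b₃ : B, ¬ BMatched (matchPair st b s b') b₃ → b₃ ≠ b := by
      intro b₃ h3 h'; exact h3 ⟨s, by rw [h']; exact mem_matchPair.mpr (Or.inl rfl)⟩
    have hsne : ∀ s₃ : S, ¬ SMatched (matchPair st b s b') s₃ → s₃ ≠ s := by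
      intro s₃ h3 h'; exact h3 ⟨b, by rw [h']; exact mem_matchPair.mpr (Or.inl rfl)⟩
    refine ⟨?_, ?_, ?_, ?_, ?_⟩
    · intro b₃ hb₃ s₃
      have hb3b : b₃ ≠ b := hbne b₃ hb₃
      have hmain : ∀ s₃ : S, st.PB b₃ ≤ Function.update st.PS s b' s₃ := by
        intro s₃
        by_cases hbm : BMatched st b₃
        · -- b₃ was displaced: it was matched to s in st
          obtain ⟨s₄, hs₄⟩ := hbm
          have hs4 : s₄ = s := by
            by_contra h'
            exact hb₃ ⟨s₄, mem_matchPair.mpr (Or.inr ⟨hs₄, hb3b, h'⟩)⟩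
          subst hs4
          have heq : st.PB b₃ = st.PS s₄ := I3 _ hs₄
          have hsm : SMatched st s₄ := ⟨b₃, hs₄⟩
          have hεle : st.PS s₄ + ε ≤ b' := by
            rcases hint.2 with ⟨h', _⟩ | ⟨_, h'⟩
            · exact absurd hsm h'
            · exact h'
          by_cases hse : s₃ = s₄
          · subst hse; simp only [Function.update_self]; linarith
          · rw [Function.update_of_ne hse]
            have := hinc.1 s₃ (edge b s₃)
            linarith
        · by_cases hse : s₃ = s
          · subst hse; simp only [Function.update_self]
            exact le_trans (I1 b₃ hbm s₃) hQs
          · rw [Function.update_of_ne hse]; exact I1 b₃ hbm s₃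
      simpa [matchPair, Function.update_of_ne hb3b] using hmain s₃
    · intro s₃ hs₃ b₃
      have hs3s : s₃ ≠ s := hsne s₃ hs₃
      have hsm3 : ¬ SMatched st s₃ := by
        rintro ⟨b₄, hb₄⟩
        have hb4b : b₄ ≠ b := fun h' => hb ⟨s₃, h' ▸ hb₄⟩
        exact hs₃ ⟨b₄, mem_matchPair.mpr (Or.inr ⟨hb₄, hb4b, hs3s⟩)⟩
      simp only [matchPair]
      rw [Function.update_of_ne hs3s]
      by_cases hbe : b₃ = b
      · subst hbe; simp only [Function.update_self]
        exact hinc.2 s₃ (edge b₃ s₃) hsm3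
      · rw [Function.update_of_ne hbe]; exact I2 s₃ hsm3 b₃
    · intro p hp
      rcases mem_matchPair.mp hp with h' | ⟨hp', h1, h2⟩
      · subst h'; simp [matchPair]
      · simp only [matchPair, Function.update_of_ne h1, Function.update_of_ne h2]
        exact I3 p hp'
    · intro b₃
      by_cases hbe : b₃ = b
      · subst hbe; simpa [matchPair] using hmul
      · simpa [matchPair, Function.update_of_ne hbe] using I4 b₃
    · intro s₃
      by_cases hse : s₃ = s
      · subst hse; simpa [matchPair] using hmul
      · simpa [matchPair, Function.update_of_ne hse] using I5 s₃
  | sellMatch s s' b hs hle1 hle2 hmul hinc hint hpri =>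
    have hPb : s' ≤ st.PB b := by
      rcases hint.2 with ⟨_, h'⟩ | ⟨_, h'⟩ <;> linarith
    have hbne : ∀ b₃ : B, ¬ BMatched (matchPair st b s s') b₃ → b₃ ≠ b := by
      intro b₃ h3 h'; exact h3 ⟨s, by rw [h']; exact mem_matchPair.mpr (Or.inl rfl)⟩
    have hsne : ∀ s₃ : S, ¬ SMatched (matchPair st b s s') s₃ → s₃ ≠ s := by
      intro s₃ h3 h'; exact h3 ⟨b, by rw [h']; exact mem_matchPair.mpr (Or.inl rfl)⟩
    refine ⟨?_, ?_, ?_, ?_, ?_⟩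
    · intro b₃ hb₃ s₃
      have hb3b : b₃ ≠ b := hbne b₃ hb₃
      have hbm3 : ¬ BMatched st b₃ := by
        rintro ⟨s₄, hs₄⟩
        have hs4s : s₄ ≠ s := fun h' => hs ⟨b₃, h' ▸ hs₄⟩
        exact hb₃ ⟨s₄, mem_matchPair.mpr (Or.inr ⟨hs₄, hb3b, hs4s⟩)⟩
      simp only [matchPair]
      rw [Function.update_of_ne hb3b]
      by_cases hse : s₃ = s
      · subst hse; simp only [Function.update_self]
        exact hinc.2 b₃ (edge b₃ s₃) hbm3
      · rw [Function.update_of_ne hse]; exact I1 b₃ hbm3 s₃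
    · intro s₃ hs₃ b₃
      have hs3s : s₃ ≠ s := hsne s₃ hs₃
      have hmain : ∀ b₃ : B, Function.update st.PB b s' b₃ ≤ st.PS s₃ := by
        intro b₃
        by_cases hsm : SMatched st s₃
        · -- s₃ was displaced: it was matched to b in st
          obtain ⟨b₄, hb₄⟩ := hsm
          have hb4 : b₄ = b := by
            by_contra h'
            exact hs₃ ⟨b₄, mem_matchPair.mpr (Or.inr ⟨hb₄, h', hs3s⟩)⟩
          subst hb4
          have heq : st.PB b₄ = st.PS s₃ := I3 _ hb₄
          have hbm : BMatched st b₄ := ⟨s₃, hb₄⟩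
          have hεle : s' + ε ≤ st.PB b₄ := by
            rcases hint.2 with ⟨h', _⟩ | ⟨_, h'⟩
            · exact absurd hbm h'
            · exact h'
          by_cases hbe : b₃ = b₄
          · subst hbe; simp only [Function.update_self]; linarith
          · rw [Function.update_of_ne hbe]
            have := hinc.1 b₃ (edge b₃ s)
            linarith
        · by_cases hbe : b₃ = b
          · subst hbe; simp only [Function.update_self]
            exact le_trans hPb (I2 s₃ hsm b₃)
          · rw [Function.update_of_ne hbe]; exact I2 s₃ hsm b₃
      simpa [matchPair, Function.update_of_ne hs3s] using hmain b₃
    · intro p hp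
      rcases mem_matchPair.mp hp with h' | ⟨hp', h1, h2⟩
      · subst h'; simp [matchPair]
      · simp only [matchPair, Function.update_of_ne h1, Function.update_of_ne h2]
        exact I3 p hp'
    · intro b₃
      by_cases hbe : b₃ = b
      · subst hbe; simpa [matchPair] using hmul
      · simpa [matchPair, Function.update_of_ne hbe] using I4 b₃
    · intro s₃
      by_cases hse : s₃ = s
      · subst hse; simpa [matchPair] using hmul
      · simpa [matchPair, Function.update_of_ne hse] using I5 s₃

lemma validStart_inv (Mk : Market B S) (hE : Mk.E = Finset.univ) (ε : ℝ)
    (st : MState B S) (h : ValidStart Mk ε st) : DOAInv ε st := by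
  obtain ⟨⟨hm, _, _, hmle⟩, hble, _, _, hmb, hms⟩ := h
  have edge : ∀ (b : B) (s : S), (b, s) ∈ Mk.E := fun b s => hE ▸ Finset.mem_univ _
  exact ⟨fun b _ s => hble (b, s) (edge b s), fun s _ b => hble (b, s) (edge b s),
    fun p hp => le_antisymm (hble p (hm.1 hp)) (hmle p hp), hmb, hms⟩

lemma inv_reachable (Mk : Market B S) (hE : Mk.E = Finset.univ)
    {ε : ℝ} (hε : 0 < ε) {st₀ st : MState B S} (hr : Reachable Mk ε st₀ st)
    (h0 : DOAInv ε st₀) : DOAInv ε st := by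
  induction hr with
  | refl => exact h0
  | tail _ hstep ih => exact inv_step Mk hE hε hstep ih

/-- in the complete-graph DOA mechanism, a buyer can make a no-change move
(overbidding a matched seller while leaving `Φ_P` unchanged) only if his bid equals the
lowest seller offer; symmetrically, a seller can make a no-change move only if his offer
equals the highest buyer bid. -/
theorem no_change_move_characterization [Nonempty B] [Nonempty S]
    (Mk : Market B S) (hE : Mk.E = Finset.univ) (ε : ℝ) (hε : 0 < ε)
    (st₀ st st' : MState B S) (h₀ : ValidStart Mk ε st₀) (hr : Reachable Mk ε st₀ st)
    (hstep : Step Mk ε st st') (hΦ : Phi st' = Phi st) :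
    (∀ (b : B) (s : S), ¬ BMatched st b → SMatched st s → (b, s) ∈ st'.M →
      st.PB b = Finset.univ.inf' Finset.univ_nonempty st.PS) ∧
    (∀ (b : B) (s : S), BMatched st b → ¬ SMatched st s → (b, s) ∈ st'.M →
      st.PS s = Finset.univ.sup' Finset.univ_nonempty st.PB) := by
  obtain ⟨I1, I2, I3, I4, I5⟩ := inv_reachable Mk hE hε hr (validStart_inv Mk hE ε st₀ h₀)
  constructor
  · intro b s hb hs hmem
    cases hstep with
    | buyBid b₁ b' h1 h2 h3 h4 h5 h6 => exact absurd ⟨s, hmem⟩ hb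
    | sellOffer s₁ s' h1 h2 h3 h4 h5 h6 => exact absurd ⟨s, hmem⟩ hb
    | buyMatch b₁ b' s₁ h1 h2 h3 h4 h5 h6 h7 =>
      rcases mem_matchPair.mp hmem with h' | ⟨hp', _, _⟩
      · obtain ⟨hb1, hs1⟩ := Prod.mk.injEq .. ▸ h'
        subst hb1; subst hs1
        rw [phi_matchPair] at hΦ
        have heq : st.PB b = st.PS s := by linarith
        refine le_antisymm (Finset.le_inf' _ _ fun s₃ _ => I1 b hb s₃) ?_
        calc Finset.univ.inf' Finset.univ_nonempty st.PS ≤ st.PS s :=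
              Finset.inf'_le _ (Finset.mem_univ s)
          _ = st.PB b := heq.symm
      · exact absurd ⟨s, hp'⟩ hb
    | sellMatch s₁ s' b₁ h1 h2 h3 h4 h5 h6 h7 =>
      rcases mem_matchPair.mp hmem with h' | ⟨hp', _, _⟩
      · obtain ⟨hb1, hs1⟩ := Prod.mk.injEq .. ▸ h'
        subst hs1; exact absurd hs h1
      · exact absurd ⟨s, hp'⟩ hb
  · intro b s hb hs hmem
    cases hstep with
    | buyBid b₁ b' h1 h2 h3 h4 h5 h6 => exact absurd ⟨b, hmem⟩ hs
    | sellOffer s₁ s' h1 h2 h3 h4 h5 h6 => exact absurd ⟨b, hmem⟩ hs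
    | buyMatch b₁ b' s₁ h1 h2 h3 h4 h5 h6 h7 =>
      rcases mem_matchPair.mp hmem with h' | ⟨hp', _, _⟩
      · obtain ⟨hb1, hs1⟩ := Prod.mk.injEq .. ▸ h'
        subst hb1; exact absurd hb h1
      · exact absurd ⟨b, hp'⟩ hs
    | sellMatch s₁ s' b₁ h1 h2 h3 h4 h5 h6 h7 =>
      rcases mem_matchPair.mp hmem with h' | ⟨hp', _, _⟩
      · obtain ⟨hb1, hs1⟩ := Prod.mk.injEq .. ▸ h'
        subst hb1; subst hs1
        rw [phi_matchPair] at hΦ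
        have heq : st.PB b = st.PS s := by linarith
        refine le_antisymm ?_ (Finset.sup'_le _ _ fun b₃ _ => I2 s hs b₃)
        calc st.PS s = st.PB b := heq.symm
          _ ≤ Finset.univ.sup' Finset.univ_nonempty st.PB :=
            Finset.le_sup' _ (Finset.mem_univ b)
      · exact absurd ⟨b, hp'⟩ hs
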